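/- Let p be a prime and n ≥ 1, let 𝔽 = GaloisField p n, and let G = AGL(1,p^n) be the semidirect product of the additive group of 𝔽 by 𝔽ˣ acting by multiplication. Then the image of 𝔽ˣ in G (the complement subgroup {(0,u) : u ∈ 𝔽ˣ}) is a maximal subgroup of G. -/

import Mathlib

/-- The canonical monoid homomorphism `AddAut A →* MulAut (Multiplicative A)`. -/
def addAutToMulAut (A : Type*) [AddGroup A] : Multiplicative (AddAut A) →* MulAut (Multiplicative A) where
  toFun f := AddEquiv.toMultiplicative f.toAdd
  map_one' := rfl
  map_mul' _ _ := rfl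

/-- The action of `𝔽ˣ` on the additive group of `𝔽 = GaloisField p n`
by field multiplication, as a map into multiplicative automorphisms. -/
noncomputable def aglAction (p n : ℕ) [Fact p.Prime] :
    (GaloisField p n)ˣ →* MulAut (Multiplicative (GaloisField p n)) :=
  (addAutToMulAut _).comp (DistribMulAction.toAddAut (GaloisField p n)ˣ (GaloisField p n))

/-- `AGL(1, p^n) = 𝔽 ⋊ 𝔽ˣ`, the affine general linear group of degree one
over the field with `p ^ n` elements. -/
noncomputable abbrev AGL1 (p n : ℕ) [Fact p.Prime] : Type :=
  Multiplicative (GaloisField p n) ⋊[aglAction p n] (GaloisField p n)ˣ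

lemma aglAction_apply (p n : ℕ) [Fact p.Prime] (v : (GaloisField p n)ˣ)
    (a : Multiplicative (GaloisField p n)) :
    Multiplicative.toAdd ((aglAction p n v) a) = (v : GaloisField p n) * Multiplicative.toAdd a :=
  rfl

theorem AGL1_complement_maximal (p n : ℕ) [Fact p.Prime] (hn : 1 ≤ n) :
    IsCoatom ((SemidirectProduct.inr :
      (GaloisField p n)ˣ →* AGL1 p n).range : Subgroup (AGL1 p n)) := by
  constructor
  · intro h
    have : (SemidirectProduct.inl (Multiplicative.ofAdd (1 : GaloisField p n)) : AGL1 p n)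
        ∈ (SemidirectProduct.inr :
          (GaloisField p n)ˣ →* AGL1 p n).range := h ▸ Subgroup.mem_top _
    obtain ⟨u, hu⟩ := this
    have h1 := congrArg SemidirectProduct.left hu
    simp only [SemidirectProduct.right_inr, SemidirectProduct.left_inr,
      SemidirectProduct.left_inl] at h1
    have : (0 : GaloisField p n) = 1 := congrArg Multiplicative.toAdd h1
    exact one_ne_zero this.symm
  · intro K hK
    obtain ⟨g, hgK, hgS⟩ := SetLike.exists_of_lt hK
    have hinr : ∀ v : (GaloisField p n)ˣ, (SemidirectProduct.inr v : AGL1 p n) ∈ K :=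
      fun v => hK.le ⟨v, rfl⟩
    have hinla : (SemidirectProduct.inl g.left : AGL1 p n) ∈ K := by
      have : (SemidirectProduct.inl g.left : AGL1 p n)
          = g * (SemidirectProduct.inr g.right)⁻¹ := by
        rw [eq_mul_inv_iff_mul_eq, SemidirectProduct.inl_left_mul_inr_right]
      rw [this]
      exact K.mul_mem hgK (K.inv_mem (hinr _))
    have ha : Multiplicative.toAdd g.left ≠ 0 := by
      intro h0
      apply hgS
      have hl : g.left = 1 := by
        have := congrArg Multiplicative.ofAdd h0
        simpa using this
      refine ⟨g.right, ?_⟩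
      conv_rhs => rw [← SemidirectProduct.inl_left_mul_inr_right g, hl]
      rw [map_one, one_mul]
    rw [eq_top_iff]
    intro x _
    rw [← SemidirectProduct.inl_left_mul_inr_right x]
    refine K.mul_mem ?_ (hinr _)
    by_cases hx : Multiplicative.toAdd x.left = 0
    · have : x.left = 1 := by simpa using congrArg Multiplicative.ofAdd hx
      rw [this, map_one]; exact K.one_mem
    · set v : (GaloisField p n)ˣ :=
        Units.mk0 (Multiplicative.toAdd x.left * (Multiplicative.toAdd g.left)⁻¹)
          (mul_ne_zero hx (inv_ne_zero ha))
      have key : (aglAction p n v) g.left = x.left := by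
        apply Multiplicative.toAdd.injective
        rw [aglAction_apply]
        show Multiplicative.toAdd x.left * (Multiplicative.toAdd g.left)⁻¹
          * Multiplicative.toAdd g.left = _
        field_simp
      have := SemidirectProduct.inl_aut (φ := aglAction p n) v g.left
      rw [key] at this
      rw [this]
      exact K.mul_mem (K.mul_mem (hinr v) hinla) (hinr v⁻¹)
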